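/- Let Ω = (0,∞) × (0,∞) × ℝ with coordinates θ = (θ_1, θ_2, θ_3), and let π : Ω → (0,∞) be C¹. Then π satisfies the partial differential equation ∂/∂θ_1{θ_1 π(θ)} + ∂/∂θ_2{θ_2 π(θ)} = 0 on Ω if and only if there exists a function h : (0,∞) × ℝ → (0,∞) such that π(θ) = θ_1^{−2} h(θ_1/θ_2, θ_3) for all θ ∈ Ω. -/

import Mathlib

open MeasureTheory Set

/-- Let `Ω = (0,∞) × (0,∞) × ℝ` and `π : Ω → (0,∞)` C¹.  Then `π`
satisfies `∂/∂θ₁{θ₁π} + ∂/∂θ₂{θ₂π} = 0` on `Ω` iff there exists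
`h : (0,∞) × ℝ → (0,∞)` with `π(θ) = θ₁⁻²h(θ₁/θ₂, θ₃)` for all `θ ∈ Ω`. -/
theorem stmt_16 (π : ℝ × ℝ × ℝ → ℝ)
    (hπC1 : ContDiffOn ℝ 1 π {θ : ℝ × ℝ × ℝ | 0 < θ.1 ∧ 0 < θ.2.1})
    (hπpos : ∀ θ : ℝ × ℝ × ℝ, 0 < θ.1 → 0 < θ.2.1 → 0 < π θ) :
    (∀ θ : ℝ × ℝ × ℝ, 0 < θ.1 → 0 < θ.2.1 →
        fderiv ℝ (fun θ' : ℝ × ℝ × ℝ => θ'.1 * π θ') θ (1, 0, 0)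
          + fderiv ℝ (fun θ' : ℝ × ℝ × ℝ => θ'.2.1 * π θ') θ (0, 1, 0) = 0) ↔
      ∃ h : ℝ × ℝ → ℝ, (∀ z : ℝ × ℝ, 0 < z.1 → 0 < h z) ∧
        ∀ θ : ℝ × ℝ × ℝ, 0 < θ.1 → 0 < θ.2.1 →
          π θ = h (θ.1 / θ.2.1, θ.2.2) / θ.1 ^ 2 := by
  have hUopen : IsOpen {θ : ℝ × ℝ × ℝ | 0 < θ.1 ∧ 0 < θ.2.1} := by
    have : {θ : ℝ × ℝ × ℝ | 0 < θ.1 ∧ 0 < θ.2.1}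
        = (Prod.fst ⁻¹' Ioi 0) ∩ ((fun θ : ℝ × ℝ × ℝ => θ.2.1) ⁻¹' Ioi 0) := rfl
    rw [this]
    exact (isOpen_Ioi.preimage continuous_fst).inter
      (isOpen_Ioi.preimage (continuous_fst.comp continuous_snd))
  have hdiff : ∀ θ : ℝ × ℝ × ℝ, 0 < θ.1 → 0 < θ.2.1 → DifferentiableAt ℝ π θ := fun θ h1 h2 =>
    (hπC1.contDiffAt (hUopen.mem_nhds ⟨h1, h2⟩)).differentiableAt one_ne_zero
  have hlin : ∀ (L : ℝ × ℝ × ℝ →L[ℝ] ℝ) (a b : ℝ),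
      L (a, b, 0) = a * L (1, 0, 0) + b * L (0, 1, 0) := by
    intro L a b
    have hv : ((a, b, 0) : ℝ × ℝ × ℝ) = a • ((1, 0, 0) : ℝ × ℝ × ℝ)
        + b • ((0, 1, 0) : ℝ × ℝ × ℝ) := by
      simp [Prod.ext_iff]
    rw [hv, map_add, L.map_smul, L.map_smul, smul_eq_mul, smul_eq_mul]
  have hray : ∀ (a b c : ℝ), 0 < a → 0 < b → ∀ s : ℝ, 0 < s →
      HasDerivAt (fun s : ℝ => π (s * a, s * b, c))
        (fderiv ℝ π (s * a, s * b, c) (a, b, 0)) s := by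
    intro a b c ha hb s hs
    have hγ : HasDerivAt (fun s : ℝ => ((s * a, s * b, c) : ℝ × ℝ × ℝ))
        ((a, b, 0) : ℝ × ℝ × ℝ) s :=
      (hasDerivAt_mul_const a).prodMk ((hasDerivAt_mul_const b).prodMk (hasDerivAt_const s c))
    exact ((hdiff (s * a, s * b, c) (by positivity) (by positivity)).hasFDerivAt).comp_hasDerivAt
      s hγ
  have hexp : ∀ θ : ℝ × ℝ × ℝ, 0 < θ.1 → 0 < θ.2.1 →
      fderiv ℝ (fun θ' : ℝ × ℝ × ℝ => θ'.1 * π θ') θ (1, 0, 0)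
        + fderiv ℝ (fun θ' : ℝ × ℝ × ℝ => θ'.2.1 * π θ') θ (0, 1, 0)
      = 2 * π θ + θ.1 * fderiv ℝ π θ (1, 0, 0) + θ.2.1 * fderiv ℝ π θ (0, 1, 0) := by
    intro θ h1 h2
    have hπd := hdiff θ h1 h2
    have hfst : DifferentiableAt ℝ (fun θ' : ℝ × ℝ × ℝ => θ'.1) θ := differentiableAt_fst
    have hsnd : DifferentiableAt ℝ (fun θ' : ℝ × ℝ × ℝ => θ'.2.1) θ :=
      differentiableAt_snd.fst
    have hf1 : fderiv ℝ (fun θ' : ℝ × ℝ × ℝ => θ'.1) θ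
        = ContinuousLinearMap.fst ℝ ℝ (ℝ × ℝ) := hasFDerivAt_fst.fderiv
    have hf2 : fderiv ℝ (fun θ' : ℝ × ℝ × ℝ => θ'.2.1) θ
        = (ContinuousLinearMap.fst ℝ ℝ ℝ).comp (ContinuousLinearMap.snd ℝ ℝ (ℝ × ℝ)) := by
      have : HasFDerivAt (fun θ' : ℝ × ℝ × ℝ => θ'.2.1)
          ((ContinuousLinearMap.fst ℝ ℝ ℝ).comp (ContinuousLinearMap.snd ℝ ℝ (ℝ × ℝ))) θ :=
        hasFDerivAt_fst.comp θ hasFDerivAt_snd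
      exact this.fderiv
    rw [fderiv_fun_mul hfst hπd, fderiv_fun_mul hsnd hπd, hf1, hf2]
    simp only [ContinuousLinearMap.add_apply, ContinuousLinearMap.coe_smul',
      Pi.smul_apply, smul_eq_mul, ContinuousLinearMap.coe_fst',
      ContinuousLinearMap.coe_comp', Function.comp_apply, ContinuousLinearMap.coe_snd']
    ring
  constructor
  · intro hPDE
    refine ⟨fun z => if 0 < z.1 then z.1 ^ 2 * π (z.1, 1, z.2) else 1, ?_, ?_⟩
    · intro z hz
      simp only [if_pos hz]
      exact mul_pos (pow_pos hz 2) (hπpos _ hz one_pos)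
    · rintro ⟨a, b, c⟩ ha hb
      simp only at ha hb ⊢
      set g : ℝ → ℝ := fun s => (s * a) ^ 2 * π (s * a, s * b, c) with hgdef
      have hg' : ∀ s : ℝ, 0 < s → HasDerivAt g 0 s := by
        intro s hs
        have h1 : HasDerivAt (fun s : ℝ => (s * a) ^ 2) (2 * (s * a) * a) s := by
          have := (hasDerivAt_mul_const (x := s) a).fun_pow 2
          simpa [mul_comm, mul_assoc, mul_left_comm] using this
        have h2 := hray a b c ha hb s hs
        have hm := h1.mul h2
        have hzero : 2 * (s * a) * a * π (s * a, s * b, c)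
            + (s * a) ^ 2 * (fderiv ℝ π (s * a, s * b, c) (a, b, 0)) = 0 := by
          have hp := hPDE (s * a, s * b, c) (by positivity) (by positivity)
          rw [hexp _ (by positivity) (by positivity)] at hp
          rw [hlin]
          simp only at hp
          linear_combination (s * a * a) * hp
        rw [hzero] at hm
        exact hm
      have hm0 : 0 < min 1 b⁻¹ := lt_min one_pos (inv_pos.2 hb)
      have hconst := constant_of_has_deriv_right_zero
        (f := g) (a := min 1 b⁻¹) (b := max 1 b⁻¹)
        (fun x hx => ((hg' x (lt_of_lt_of_le hm0 hx.1)).continuousAt).continuousWithinAt)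
        (fun x hx => ((hg' x (lt_of_lt_of_le hm0 hx.1)).hasDerivWithinAt))
      have h1 := hconst 1 ⟨min_le_left _ _, le_max_left _ _⟩
      have h2 := hconst b⁻¹ ⟨min_le_right _ _, le_max_right _ _⟩
      have hgeq : g 1 = g b⁻¹ := h1.trans h2.symm
      have hib : b⁻¹ * b = 1 := inv_mul_cancel₀ hb.ne'
      have hiba : b⁻¹ * a = a / b := by rw [div_eq_mul_inv, mul_comm]
      rw [hgdef] at hgeq
      simp only [one_mul, hib, hiba] at hgeq
      rw [if_pos (div_pos ha hb), ← hgeq]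
      field_simp
  · rintro ⟨h, hpos, hrep⟩ θ h1 h2
    obtain ⟨a, b, c⟩ := θ
    simp only at h1 h2
    rw [hexp _ h1 h2]
    simp only
    have hD := hray a b c h1 h2 1 one_pos
    simp only [one_mul] at hD
    have hφ : HasDerivAt (fun s : ℝ => π (a, b, c) / s ^ 2) (-(2 * π (a, b, c))) 1 := by
      have hpow : HasDerivAt (fun s : ℝ => s ^ 2) 2 1 := by
        simpa using hasDerivAt_pow 2 (1 : ℝ)
      have := (hpow.inv (by norm_num)).const_mul (π (a, b, c))
      have heq : (fun s : ℝ => π (a, b, c) / s ^ 2)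
          = fun s : ℝ => π (a, b, c) * (s ^ 2)⁻¹ := by
        funext s; rw [div_eq_mul_inv]
      rw [heq]
      exact this.congr_deriv (by ring)
    have hEq : (fun s : ℝ => π (s * a, s * b, c))
        =ᶠ[nhds 1] (fun s : ℝ => π (a, b, c) / s ^ 2) := by
      filter_upwards [Ioi_mem_nhds (zero_lt_one (α := ℝ))] with s hs
      have hs' : (0 : ℝ) < s := hs
      have e1 := hrep (s * a, s * b, c) (by positivity) (by positivity)
      have e2 := hrep (a, b, c) h1 h2
      simp only at e1 e2
      have hq : s * a / (s * b) = a / b := mul_div_mul_left a b hs'.ne'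
      rw [e1, e2, hq, mul_pow, div_div, mul_comm (s ^ 2) (a ^ 2)]
    have hD2 : HasDerivAt (fun s : ℝ => π (s * a, s * b, c)) (-(2 * π (a, b, c))) 1 :=
      hφ.congr_of_eventuallyEq hEq
    have huniq := hD.unique hD2
    rw [hlin] at huniq
    linarith
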